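/- With the notation of the MABS model: if Ω_{m,m}^{δ'} is non-empty for δ' = 0.2·Δ𝔄_min/√m, then for any M ≥ m the set Ω_{m,M}^{δ} is non-empty with δ = 0.2·Δ𝔄_min·√⌊M/m⌋/√M. Concretely, if ω' ∈ Ω_{m,m}^{δ'}, then ω = (ω', …, ω' (⌊M/m⌋ copies), e^m, …, e^m) ∈ Ω_{m,M} satisfies ASB(ω) ≥ δ and WSB(ω) ≥ δ. -/

import Mathlib

open Finset Real

namespace MABS

/-- Euclidean norm of a vector in `ℝ^M`. -/
noncomputable def vnorm {M : ℕ} (v : Fin M → ℝ) : ℝ := Real.sqrt (∑ j, (v j) ^ 2)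

/-- Euclidean norm of the `i`-th row of the mixing matrix `ω`. -/
noncomputable def rowNorm {m M : ℕ} (ω : Fin m → Fin M → ℝ) (i : Fin m) : ℝ := vnorm (ω i)

/-- `e` has all its entries in the alphabet `𝔄`. -/
def inAlph (𝔄 : Finset ℝ) {m : ℕ} (e : Fin m → ℝ) : Prop := ∀ i, e i ∈ 𝔄

/-- The mixture `e ω ∈ ℝ^M` of the rows of `ω` with coefficients `e`. -/
noncomputable def mix {m M : ℕ} (e : Fin m → ℝ) (ω : Fin m → Fin M → ℝ) : Fin M → ℝ :=
  fun j => ∑ i, e i * ω i j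

/-- Alphabet separation boundary `ASB(ω) = min_{e ≠ e' ∈ 𝔄^m} ‖eω - e'ω‖ / √M`. -/
noncomputable def ASB (𝔄 : Finset ℝ) {m M : ℕ} (ω : Fin m → Fin M → ℝ) : ℝ :=
  sInf {x : ℝ | ∃ e e' : Fin m → ℝ, inAlph 𝔄 e ∧ inAlph 𝔄 e' ∧ e ≠ e' ∧
    x = vnorm (mix e ω - mix e' ω) / Real.sqrt (M : ℝ)}

/-- `WSB(ω) ≥ δ`, i.e. every consecutive row-norm gap is at least `2δ√M/(1+m·a_k)`. -/
def WSBge (ak δ : ℝ) {m M : ℕ} (ω : Fin m → Fin M → ℝ) : Prop :=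
  ∀ i j : Fin m, (j : ℕ) = (i : ℕ) + 1 →
    δ ≤ ((1 + (m : ℝ) * ak) / (2 * Real.sqrt (M : ℝ))) * (rowNorm ω j - rowNorm ω i)

/-- Weights separation boundary as a real number. -/
noncomputable def WSBval (ak : ℝ) {m M : ℕ} (ω : Fin m → Fin M → ℝ) : ℝ :=
  ((1 + (m : ℝ) * ak) / (2 * Real.sqrt (M : ℝ))) *
    sInf {x : ℝ | ∃ i j : Fin m, (j : ℕ) = (i : ℕ) + 1 ∧ x = rowNorm ω j - rowNorm ω i}

/-- `ω ∈ Ω_{m,M}`: nonnegative entries, columns summing to one, strictly increasing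
positive row norms. -/
def Omega {m M : ℕ} (ω : Fin m → Fin M → ℝ) : Prop :=
  (∀ i j, 0 ≤ ω i j) ∧ (∀ j, ∑ i, ω i j = 1) ∧
    (∀ i, 0 < rowNorm ω i) ∧ StrictMono (rowNorm ω)

/-- The alphabet `𝔄 = {0, 1, a₃, …, a_k}` with `1 < a₃ < … < a_k`: it contains `0` and `1`,
`ak` is its maximal element, and every nonzero element is at least `1`. -/
def AlphOK (𝔄 : Finset ℝ) (ak : ℝ) : Prop :=
  (0 : ℝ) ∈ 𝔄 ∧ (1 : ℝ) ∈ 𝔄 ∧ ak ∈ 𝔄 ∧ (∀ x ∈ 𝔄, x ≤ ak) ∧ (∀ x ∈ 𝔄, x = 0 ∨ 1 ≤ x)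

/-- `Δ𝔄_min`, the minimal distance between distinct alphabet values. -/
noncomputable def DeltaMin (𝔄 : Finset ℝ) : ℝ :=
  sInf {x : ℝ | ∃ a ∈ 𝔄, ∃ b ∈ 𝔄, a ≠ b ∧ x = |a - b|}

/-- The `i`-th standard unit (row) vector in `ℝ^m`. -/
def unitRow {m : ℕ} (i : Fin m) : Fin m → ℝ := fun i' => if i' = i then 1 else 0

/-- `F = ΠA` is a separable finite-alphabet design: every row lies in `𝔄^m` and every
standard unit vector occurs among the rows. -/
def Separable (𝔄 : Finset ℝ) {n m : ℕ} (F : Fin n → Fin m → ℝ) : Prop :=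
  (∀ j, inAlph 𝔄 (F j)) ∧ ∀ i : Fin m, ∃ j, F j = unitRow i

end MABS

lemma sum_range_mul_mod (m : ℕ) (F : ℕ → ℝ) (hper : ∀ j, F j = F (j % m)) (q : ℕ) :
    ∑ j ∈ Finset.range (q * m), F j = q * ∑ j ∈ Finset.range m, F j := by
  induction q with
  | zero => simp
  | succ q ih =>
    have hqm : (q + 1) * m = q * m + m := by ring
    rw [hqm, ← Finset.sum_range_add_sum_Ico F (Nat.le_add_right _ _), ih,
      Finset.sum_Ico_eq_sum_range]
    have h2 : q * m + m - q * m = m := by omega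
    rw [h2]
    have hc : ∀ i ∈ Finset.range m, F (q * m + i) = F i := by
      intro i hi
      rw [hper (q * m + i), Nat.mul_add_mod' q m i, Nat.mod_eq_of_lt (Finset.mem_range.mp hi)]
    rw [Finset.sum_congr rfl hc]
    push_cast; ring

lemma blockSum {M m : ℕ} (hm : 0 < m) (q : ℕ) (hq : q * m ≤ M) (F : Fin m → ℝ) (G : ℝ) :
    ∑ j : Fin M, (if (j : ℕ) < q * m then F ⟨(j : ℕ) % m, Nat.mod_lt _ hm⟩ else G)
      = q * ∑ j', F j' + ((M : ℝ) - q * m) * G := by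
  set F' : ℕ → ℝ := fun j => if j < q * m then F ⟨j % m, Nat.mod_lt _ hm⟩ else G with hF'
  rw [Fin.sum_univ_eq_sum_range (fun j => F' j)]
  rw [← Finset.sum_range_add_sum_Ico F' hq]
  have h1 : ∑ j ∈ Finset.range (q * m), F' j = q * ∑ j', F j' := by
    have hstep : ∀ j ∈ Finset.range (q * m), F' j = (fun j => F ⟨j % m, Nat.mod_lt _ hm⟩) j := by
      intro j hj
      simp only [hF', Finset.mem_range.mp hj, if_true]
    rw [Finset.sum_congr rfl hstep,
      sum_range_mul_mod m _ (fun j => by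
        simp [Nat.mod_mod_of_dvd j (dvd_refl m)]) q]
    congr 1
    rw [show (∑ j' : Fin m, F j') = ∑ j' : Fin m, F ⟨(j' : ℕ) % m, Nat.mod_lt _ hm⟩ from
      Finset.sum_congr rfl fun j' _ => by
        congr 1; exact (Fin.ext (Nat.mod_eq_of_lt j'.isLt)).symm,
      Fin.sum_univ_eq_sum_range (fun j => F ⟨j % m, Nat.mod_lt _ hm⟩) m]
  have h2 : ∑ j ∈ Finset.Ico (q * m) M, F' j = ((M : ℝ) - q * m) * G := by
    have hstep : ∀ j ∈ Finset.Ico (q * m) M, F' j = G := by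
      intro j hj
      have : ¬ j < q * m := not_lt.mpr (Finset.mem_Ico.mp hj).1
      simp [hF', this]
    rw [Finset.sum_congr rfl hstep, Finset.sum_const, Nat.card_Ico, nsmul_eq_mul,
      Nat.cast_sub hq]
    push_cast; ring
  rw [h1, h2]


set_option maxHeartbeats 1600000 in
/-- If `ω' ∈ Ω_{m,m}` satisfies `min(ASB, WSB) ≥ 0.2·Δ𝔄_min/√m`, then for
any `M ≥ m` the block matrix `ω = (ω', …, ω' (⌊M/m⌋ copies), e^m, …, e^m)` lies in
`Ω_{m,M}` and satisfies `ASB(ω) ≥ δ` and `WSB(ω) ≥ δ` for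
`δ = 0.2·Δ𝔄_min·√⌊M/m⌋/√M`; in particular `Ω_{m,M}^δ` is non-empty. -/
theorem stmt7 {m M : ℕ} (hm : 0 < m) (hmM : m ≤ M) (𝔄 : Finset ℝ) (ak : ℝ)
    (hA : MABS.AlphOK 𝔄 ak) (ω' : Fin m → Fin m → ℝ) (hΩ : MABS.Omega ω')
    (hasb : 0.2 * MABS.DeltaMin 𝔄 / Real.sqrt (m : ℝ) ≤ MABS.ASB 𝔄 ω')
    (hwsb : MABS.WSBge ak (0.2 * MABS.DeltaMin 𝔄 / Real.sqrt (m : ℝ)) ω') :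
    let δ : ℝ := 0.2 * MABS.DeltaMin 𝔄 * Real.sqrt ((M / m : ℕ) : ℝ) / Real.sqrt (M : ℝ)
    let ω : Fin m → Fin M → ℝ := fun i j =>
      if (j : ℕ) < (M / m) * m then ω' i ⟨(j : ℕ) % m, Nat.mod_lt _ hm⟩
      else if (i : ℕ) = m - 1 then 1 else 0
    MABS.Omega ω ∧ δ ≤ MABS.ASB 𝔄 ω ∧ MABS.WSBge ak δ ω := by
  intro δ ω
  set q : ℕ := M / m with hqdef
  have hqm : q * m ≤ M := Nat.div_mul_le_self M m
  have hq1 : 1 ≤ q := (Nat.one_le_div_iff hm).mpr hmM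
  have hMpos : 0 < M := lt_of_lt_of_le hm hmM
  set R : ℝ := (M : ℝ) - q * m with hRdef
  have hRnn : 0 ≤ R := by
    have : ((q * m : ℕ) : ℝ) ≤ (M : ℝ) := Nat.cast_le.mpr hqm
    push_cast at this; simp [hRdef]; linarith
  set S : Fin m → ℝ := fun i => ∑ j', (ω' i j') ^ 2 with hSdef
  set t : Fin m → ℝ := fun i => if (i : ℕ) = m - 1 then 1 else 0 with htdef
  have hSnn : ∀ i, 0 ≤ S i := fun i => Finset.sum_nonneg fun _ _ => sq_nonneg _
  have hSpos : ∀ i, 0 < S i := by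
    intro i
    have h := hΩ.2.2.1 i
    have : MABS.rowNorm ω' i = Real.sqrt (S i) := rfl
    rw [this] at h
    exact (Real.sqrt_pos.mp h)
  have htnn : ∀ i, 0 ≤ t i := by
    intro i; simp only [htdef]; split <;> norm_num
  have hqpos : (0 : ℝ) < q := by exact_mod_cast lt_of_lt_of_le one_pos hq1
  -- row norm formula
  have hrowSq : ∀ i, ∑ j : Fin M, (ω i j) ^ 2 = q * S i + R * t i := by
    intro i
    have hpt : ∀ j : Fin M, (ω i j) ^ 2 =
        (if (j : ℕ) < q * m then (fun j' => (ω' i j') ^ 2) ⟨(j : ℕ) % m, Nat.mod_lt _ hm⟩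
         else t i) := by
      intro j
      simp only [ω, htdef]
      split_ifs <;> norm_num
    rw [Finset.sum_congr rfl (fun j _ => hpt j)]
    exact blockSum hm q hqm (fun j' => (ω' i j') ^ 2) (t i)
  have hrow : ∀ i, MABS.rowNorm ω i = Real.sqrt (q * S i + R * t i) := by
    intro i
    show Real.sqrt (∑ j, (ω i j) ^ 2) = _
    rw [hrowSq i]
  have hrow' : ∀ i, MABS.rowNorm ω' i = Real.sqrt (S i) := fun _ => rfl
  -- last index
  have hlast : (⟨m - 1, by omega⟩ : Fin m) = ⟨m - 1, by omega⟩ := rfl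
  constructor
  · -- Omega ω
    refine ⟨?_, ?_, ?_, ?_⟩
    · intro i j
      simp only [ω]
      split_ifs with h1 h2
      · exact hΩ.1 i _
      · norm_num
      · exact le_refl 0
    · intro j
      by_cases hj : (j : ℕ) < q * m
      · simp only [ω, ← hqdef, hj, if_true]
        exact hΩ.2.1 _
      · simp only [ω, ← hqdef, hj, if_false]
        have hcond : ∀ x : Fin m, ((x : ℕ) = m - 1) ↔ (x = (⟨m - 1, by omega⟩ : Fin m)) := by
          intro x; rw [Fin.ext_iff]
        simp only [hcond]
        simp [Finset.sum_ite_eq']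
    · intro i
      rw [hrow i]
      apply Real.sqrt_pos.mpr
      have := mul_pos hqpos (hSpos i)
      nlinarith [mul_nonneg hRnn (htnn i)]
    · intro i i' hii'
      rw [hrow i, hrow i']
      apply Real.sqrt_lt_sqrt
      · positivity
      have hti : t i = 0 := by
        simp only [htdef]
        rw [if_neg]
        have := i'.isLt
        have : (i : ℕ) < (i' : ℕ) := hii'
        omega
      have hSlt : S i < S i' := by
        have h := hΩ.2.2.2 hii'
        rw [hrow' i, hrow' i'] at h
        nlinarith [Real.sq_sqrt (hSnn i), Real.sq_sqrt (hSnn i'), Real.sqrt_nonneg (S i),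
          Real.sqrt_nonneg (S i')]
      rw [hti]
      nlinarith [mul_nonneg hRnn (htnn i')]
  have hMr : (0:ℝ) < Real.sqrt M := Real.sqrt_pos.mpr (by exact_mod_cast hMpos)
  have hmr : (0:ℝ) < Real.sqrt m := Real.sqrt_pos.mpr (by exact_mod_cast hm)
  have hqnn : (0:ℝ) ≤ (q:ℝ) := le_of_lt hqpos
  set lastI : Fin m := ⟨m - 1, by omega⟩ with hlastI
  constructor
  · -- ASB bound
    have hsum_ind : ∀ (f : Fin m → ℝ),
        (∑ i, f i * (if (i : ℕ) = m - 1 then 1 else 0)) = f lastI := by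
      intro f
      have hcond : ∀ x : Fin m, ((x : ℕ) = m - 1) ↔ (x = lastI) := by
        intro x; rw [Fin.ext_iff]
      simp only [hcond, mul_ite, mul_one, mul_zero]
      simp [Finset.sum_ite_eq']
    show δ ≤ sInf _
    apply le_csInf
    · refine ⟨MABS.vnorm (MABS.mix (fun _ => (0:ℝ)) ω - MABS.mix (fun _ => (1:ℝ)) ω) /
        Real.sqrt M, (fun _ => 0), (fun _ => 1), fun _ => hA.1, fun _ => hA.2.1, ?_, rfl⟩
      intro h
      have := congrFun h ⟨0, hm⟩
      norm_num at this
    rintro x ⟨e, e', he, he', hne, rfl⟩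
    have hpt : ∀ j : Fin M, ((MABS.mix e ω - MABS.mix e' ω) j) ^ 2 =
        if (j : ℕ) < q * m then
          (fun j' => ((MABS.mix e ω' - MABS.mix e' ω') j') ^ 2) ⟨(j : ℕ) % m, Nat.mod_lt _ hm⟩
        else (e lastI - e' lastI) ^ 2 := by
      intro j
      by_cases hj : (j : ℕ) < q * m
      · simp only [ω, ← hqdef, hj, if_true, Pi.sub_apply, MABS.mix]
      · simp only [ω, ← hqdef, hj, if_false, Pi.sub_apply, MABS.mix]
        rw [hsum_ind e, hsum_ind e']
    set V2 : ℝ := ∑ j', ((MABS.mix e ω' - MABS.mix e' ω') j') ^ 2 with hV2def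
    have hV2nn : 0 ≤ V2 := Finset.sum_nonneg fun _ _ => sq_nonneg _
    have hsum : ∑ j : Fin M, ((MABS.mix e ω - MABS.mix e' ω) j) ^ 2
        = q * V2 + R * (e lastI - e' lastI) ^ 2 := by
      rw [Finset.sum_congr rfl (fun j _ => hpt j)]
      exact blockSum hm q hqm (fun j' => ((MABS.mix e ω' - MABS.mix e' ω') j') ^ 2)
        ((e lastI - e' lastI) ^ 2)
    have hbdd : BddBelow {x : ℝ | ∃ e e' : Fin m → ℝ, MABS.inAlph 𝔄 e ∧ MABS.inAlph 𝔄 e' ∧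
        e ≠ e' ∧ x = MABS.vnorm (MABS.mix e ω' - MABS.mix e' ω') / Real.sqrt (m : ℝ)} := by
      refine ⟨0, ?_⟩
      rintro x ⟨a, b, _, _, _, rfl⟩
      exact div_nonneg (Real.sqrt_nonneg _) (Real.sqrt_nonneg _)
    have hVge : 0.2 * MABS.DeltaMin 𝔄 / Real.sqrt (m : ℝ) ≤
        MABS.vnorm (MABS.mix e ω' - MABS.mix e' ω') / Real.sqrt (m : ℝ) :=
      le_trans hasb (csInf_le hbdd ⟨e, e', he, he', hne, rfl⟩)
    have hV : 0.2 * MABS.DeltaMin 𝔄 ≤ Real.sqrt V2 := by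
      have h' := (div_le_div_iff_of_pos_right hmr).mp hVge
      exact h'
    have h1 : MABS.vnorm (MABS.mix e ω - MABS.mix e' ω)
        = Real.sqrt (q * V2 + R * (e lastI - e' lastI) ^ 2) := by
      show Real.sqrt _ = _
      rw [hsum]
    rw [h1]
    have h2 : Real.sqrt (q : ℝ) * Real.sqrt V2 ≤
        Real.sqrt ((q : ℝ) * V2 + R * (e lastI - e' lastI) ^ 2) := by
      rw [← Real.sqrt_mul hqnn]
      have hq2 : (q:ℝ) * V2 ≤ (q:ℝ) * V2 + R * (e lastI - e' lastI) ^ 2 := by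
        linarith [mul_nonneg hRnn (sq_nonneg (e lastI - e' lastI))]
      exact Real.sqrt_le_sqrt hq2
    show 0.2 * MABS.DeltaMin 𝔄 * Real.sqrt ((q : ℕ) : ℝ) / Real.sqrt (M : ℝ) ≤ _
    have h3 : 0.2 * MABS.DeltaMin 𝔄 * Real.sqrt ((q : ℕ) : ℝ) ≤
        Real.sqrt (q : ℝ) * Real.sqrt V2 := by
      rw [mul_comm (0.2 * MABS.DeltaMin 𝔄) _]
      exact mul_le_mul_of_nonneg_left hV (Real.sqrt_nonneg _)
    exact (div_le_div_iff_of_pos_right hMr).mpr (le_trans h3 h2)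
  · -- WSB bound
    intro i j hji
    have hjlt := j.isLt
    have hilt : (i : ℕ) < m - 1 := by omega
    have hti : t i = 0 := by
      simp only [htdef]
      rw [if_neg]
      omega
    have h0 := hwsb i j hji
    set g' : ℝ := MABS.rowNorm ω' j - MABS.rowNorm ω' i with hg'def
    set P : ℝ := 1 + (m : ℝ) * ak with hPdef
    have hak : (1:ℝ) ≤ ak := hA.2.2.2.1 1 hA.2.1
    have hmnn : (0:ℝ) ≤ (m : ℝ) := Nat.cast_nonneg m
    have hPpos : 0 < P := by rw [hPdef]; nlinarith
    have hmne : Real.sqrt (m : ℝ) ≠ 0 := ne_of_gt hmr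
    have h1 : 0.2 * MABS.DeltaMin 𝔄 ≤ P / 2 * g' := by
      rw [div_le_iff₀ hmr] at h0
      have heq : P / (2 * Real.sqrt (m : ℝ)) * g' * Real.sqrt (m : ℝ) = P / 2 * g' := by
        field_simp
      linarith [h0, heq.ge, heq.le]
    have hrni : MABS.rowNorm ω i = Real.sqrt (q : ℝ) * MABS.rowNorm ω' i := by
      rw [hrow i, hti, hrow' i, mul_zero, add_zero, Real.sqrt_mul hqnn]
    have hrnj : Real.sqrt (q : ℝ) * MABS.rowNorm ω' j ≤ MABS.rowNorm ω j := by
      rw [hrow j, hrow' j, ← Real.sqrt_mul hqnn]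
      have hj2 : (q:ℝ) * S j ≤ (q:ℝ) * S j + R * t j := by linarith [mul_nonneg hRnn (htnn j)]
      exact Real.sqrt_le_sqrt hj2
    have hgap : Real.sqrt (q : ℝ) * g' ≤ MABS.rowNorm ω j - MABS.rowNorm ω i := by
      rw [hg'def, hrni]
      nlinarith [hrnj]
    have hPM : (0:ℝ) ≤ P / (2 * Real.sqrt (M : ℝ)) := by positivity
    show 0.2 * MABS.DeltaMin 𝔄 * Real.sqrt ((q : ℕ) : ℝ) / Real.sqrt (M : ℝ) ≤
      P / (2 * Real.sqrt (M : ℝ)) * (MABS.rowNorm ω j - MABS.rowNorm ω i)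
    have hsqnn : (0:ℝ) ≤ Real.sqrt (q : ℝ) / Real.sqrt (M : ℝ) := by positivity
    calc 0.2 * MABS.DeltaMin 𝔄 * Real.sqrt ((q : ℕ) : ℝ) / Real.sqrt (M : ℝ)
        = (Real.sqrt (q : ℝ) / Real.sqrt (M : ℝ)) * (0.2 * MABS.DeltaMin 𝔄) := by ring
      _ ≤ (Real.sqrt (q : ℝ) / Real.sqrt (M : ℝ)) * (P / 2 * g') :=
          mul_le_mul_of_nonneg_left h1 hsqnn
      _ = P / (2 * Real.sqrt (M : ℝ)) * (Real.sqrt (q : ℝ) * g') := by ring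
      _ ≤ P / (2 * Real.sqrt (M : ℝ)) * (MABS.rowNorm ω j - MABS.rowNorm ω i) :=
          mul_le_mul_of_nonneg_left hgap hPM
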